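/- Let A₁, A₂ be unital *-algebras over ℂ and φᵢ : Aᵢ → ℂ states (positive unital linear functionals). Then φ₁ ⊗ φ₂ is a state on the tensor product *-algebra A₁ ⊗ A₂; in particular (φ₁ ⊗ φ₂)((x*)·x) ≥ 0 for all x ∈ A₁ ⊗ A₂. -/

import Mathlib

open scoped ComplexOrder TensorProduct
open Matrix

section Aux

variable {A : Type*} [Ring A] [Algebra ℂ A] [StarRing A] [StarModule ℂ A]

lemma state_im_zero (φ : A →ₗ[ℂ] ℂ) (hp : ∀ a : A, 0 ≤ φ (star a * a)) (a : A) :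
    (φ (star a * a)).im = 0 := ((Complex.le_def.mp (hp a)).2).symm

lemma state_star_apply (φ : A →ₗ[ℂ] ℂ) (hp : ∀ a : A, 0 ≤ φ (star a * a)) (a b : A) :
    starRingEnd ℂ (φ (star a * b)) = φ (star b * a) := by
  set s := φ (star a * b) with hs
  set t := φ (star b * a) with ht
  have h1 : (s + t).im = 0 := by
    have := state_im_zero φ hp (a + b)
    have e : φ (star (a + b) * (a + b))
        = φ (star a * a) + (s + t) + φ (star b * b) := by
      rw [hs, ht]
      simp only [star_add, add_mul, mul_add, map_add]
      ring
    rw [e] at this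
    simp only [Complex.add_im, state_im_zero φ hp a, state_im_zero φ hp b] at this
    simp only [Complex.add_im]
    linarith
  have h2 : (s - t).re = 0 := by
    have := state_im_zero φ hp (a + Complex.I • b)
    have e : φ (star (a + Complex.I • b) * (a + Complex.I • b))
        = φ (star a * a) + Complex.I * (s - t) + φ (star b * b) := by
      rw [hs, ht]
      have hstar : star (Complex.I • b) = (-Complex.I) • star b := by
        rw [star_smul]
        simp [RingHom.id_apply, Complex.conj_I]
      simp only [star_add, hstar, add_mul, mul_add, map_add, smul_mul_assoc,
        mul_smul_comm, _root_.map_smul, smul_eq_mul, smul_smul, neg_mul,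
        Complex.I_mul_I, neg_neg, one_mul]
      ring_nf
      rw [Complex.I_sq]
      ring
    rw [e] at this
    simp only [Complex.add_im, state_im_zero φ hp a, state_im_zero φ hp b,
      Complex.mul_im, Complex.I_re, Complex.I_im] at this
    simp only [Complex.sub_re]
    simp only [Complex.sub_re, Complex.sub_im] at this
    linarith
  apply Complex.ext
  · simp only [Complex.conj_re]
    have := h2
    simp only [Complex.sub_re] at this
    linarith
  · simp only [Complex.conj_im]
    have := h1
    simp only [Complex.add_im] at this
    linarith

/-- The "Gram" matrix of a state is positive semidefinite. -/
lemma state_matrix_posSemidef {n : Type} [Fintype n]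
    (φ : A →ₗ[ℂ] ℂ) (hp : ∀ a : A, 0 ≤ φ (star a * a)) (a : n → A) :
    Matrix.PosSemidef (Matrix.of fun i j => φ (star (a i) * a j)) := by
  rw [Matrix.posSemidef_iff_dotProduct_mulVec]
  constructor
  · ext i j
    simp only [Matrix.conjTranspose_apply, Matrix.of_apply]
    exact state_star_apply φ hp (a j) (a i)
  · intro x
    have key : dotProduct (star x) ((Matrix.of fun i j => φ (star (a i) * a j)) *ᵥ x)
        = φ (star (∑ i, x i • a i) * (∑ j, x j • a j)) := by
      simp only [dotProduct, Matrix.mulVec, Matrix.of_apply, Pi.star_apply]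
      rw [star_sum, Finset.sum_mul, map_sum]
      refine Finset.sum_congr rfl fun i _ => ?_
      rw [Finset.mul_sum, Finset.mul_sum, map_sum]
      refine Finset.sum_congr rfl fun j _ => ?_
      rw [star_smul, smul_mul_assoc, mul_smul_comm, _root_.map_smul, _root_.map_smul]
      simp only [smul_eq_mul, RCLike.star_def]
      ring
    rw [key]
    exact hp _
  
/-- Baby Schur product theorem consequence. -/
lemma sum_entrywise_mul_nonneg {n : Type} [Fintype n] {M N : Matrix n n ℂ}
    (hM : M.PosSemidef) (hN : N.PosSemidef) :
    0 ≤ ∑ i, ∑ j, M i j * N i j := by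
  classical
  open scoped MatrixOrder Matrix.Norms.L2Operator in
  obtain ⟨B, hB⟩ := CStarAlgebra.nonneg_iff_eq_star_mul_self.mp hN.nonneg
  obtain rfl : N = Bᴴ * B := hB
  have step1 : ∑ i, ∑ j, M i j * (Bᴴ * B) i j
      = ∑ k, ∑ i, ∑ j, (starRingEnd ℂ) (B k i) * (M i j * B k j) := by
    simp only [Matrix.mul_apply, Matrix.conjTranspose_apply, Finset.mul_sum, RCLike.star_def]
    rw [Finset.sum_congr rfl fun i _ => Finset.sum_comm, Finset.sum_comm]
    refine Finset.sum_congr rfl fun k _ => Finset.sum_congr rfl fun i _ =>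
      Finset.sum_congr rfl fun j _ => by ring
  have step2 : ∀ k, ∑ i, ∑ j, (starRingEnd ℂ) (B k i) * (M i j * B k j)
      = dotProduct (star fun i => B k i) (M *ᵥ fun j => B k j) := by
    intro k
    simp only [dotProduct, Matrix.mulVec, Pi.star_apply, RCLike.star_def,
      Finset.mul_sum]
  rw [step1]
  exact Finset.sum_nonneg fun k _ => (step2 k) ▸ hM.dotProduct_mulVec_nonneg _

end Aux

/-- The product functional `φ₁ ⊗ φ₂` on `A₁ ⊗ A₂`. -/
noncomputable def tensorFunctional {A₁ A₂ : Type*}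
    [Ring A₁] [Algebra ℂ A₁] [Ring A₂] [Algebra ℂ A₂]
    (φ₁ : A₁ →ₗ[ℂ] ℂ) (φ₂ : A₂ →ₗ[ℂ] ℂ) : A₁ ⊗[ℂ] A₂ →ₗ[ℂ] ℂ :=
  (LinearMap.mul' ℂ ℂ).comp (TensorProduct.map φ₁ φ₂)

/-- The tensor product of states is a state: it is unital, and positive on
`x* x` for every `x ∈ A₁ ⊗ A₂` (written as a finite sum `Σ aᵢ ⊗ bᵢ`, whose
adjoint is `Σ aᵢ* ⊗ bᵢ*`). -/
theorem tensor_product_of_states {A₁ A₂ : Type*}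
    [Ring A₁] [Algebra ℂ A₁] [StarRing A₁] [StarModule ℂ A₁]
    [Ring A₂] [Algebra ℂ A₂] [StarRing A₂] [StarModule ℂ A₂]
    (φ₁ : A₁ →ₗ[ℂ] ℂ) (φ₂ : A₂ →ₗ[ℂ] ℂ)
    (hu₁ : φ₁ 1 = 1) (hu₂ : φ₂ 1 = 1)
    (hp₁ : ∀ a : A₁, 0 ≤ φ₁ (star a * a)) (hp₂ : ∀ a : A₂, 0 ≤ φ₂ (star a * a)) :
    tensorFunctional φ₁ φ₂ 1 = 1 ∧
    ∀ {ι : Type} (s : Finset ι) (a : ι → A₁) (b : ι → A₂),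
      0 ≤ tensorFunctional φ₁ φ₂
        ((∑ i ∈ s, star (a i) ⊗ₜ[ℂ] star (b i)) * (∑ i ∈ s, a i ⊗ₜ[ℂ] b i)) := by
  constructor
  · rw [Algebra.TensorProduct.one_def]
    simp [tensorFunctional, hu₁, hu₂]
  · intro ι s a b
    have key : tensorFunctional φ₁ φ₂
        ((∑ i ∈ s, star (a i) ⊗ₜ[ℂ] star (b i)) * (∑ i ∈ s, a i ⊗ₜ[ℂ] b i))
        = ∑ i ∈ s.attach, ∑ j ∈ s.attach,
            φ₁ (star (a i) * a j) * φ₂ (star (b i) * b j) := by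
      rw [Finset.sum_mul_sum]
      simp only [Algebra.TensorProduct.tmul_mul_tmul, map_sum]
      rw [← Finset.sum_attach s, Finset.sum_congr rfl fun i _ => (Finset.sum_attach s _).symm]
      simp [tensorFunctional]
    rw [key]
    have := sum_entrywise_mul_nonneg
      (state_matrix_posSemidef φ₁ hp₁ (fun i : {x // x ∈ s} => a i))
      (state_matrix_posSemidef φ₂ hp₂ (fun i : {x // x ∈ s} => b i))
    simpa [Finset.sum_attach] using this
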